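/- For every x ∈ ℚ_p, the convergents P_n of Schneider's continued fraction of x (with partial quotients a_k := ⌊1/ε(τ^k(x))⌋_p and numerators b_k := τ^k(x)/ε(τ^k(x))) satisfy |x - P_n|_p ≤ p^{-n}|x|_p, and hence P_n → x in ℚ_p. -/
import Mathlib


open scoped Classical in
noncomputable def eps {p : ℕ} [Fact p.Prime] (x : ℚ_[p]) : ℚ_[p] :=
  if x = 0 then 1 else (p : ℚ_[p]) ^ (-x.valuation) * x

noncomputable def fdigit {p : ℕ} [Fact p.Prime] (x : ℚ_[p]) : ℕ :=
  if h : ‖x‖ ≤ 1 then ((PadicInt.toZMod (⟨x, h⟩ : ℤ_[p])).val) else 0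

noncomputable def tau {p : ℕ} [Fact p.Prime] (x : ℚ_[p]) : ℚ_[p] :=
  1 / eps x - (fdigit (1 / eps x) : ℚ_[p])

noncomputable def sigma {p : ℕ} [Fact p.Prime] (x : ℚ_[p]) : ℚ_[p] :=
  eps x - (fdigit (eps x) : ℚ_[p])

/-- `f(x) = Σ_{n=0}^∞ ⌊1/ε(τⁿ x)⌋_p ∏_{m=0}^n τᵐ x / ε(τᵐ x)` -/
noncomputable def schneiderF {p : ℕ} [Fact p.Prime] (x : ℚ_[p]) : ℚ_[p] :=
  ∑' n : ℕ, (fdigit (1 / eps (tau^[n] x)) : ℚ_[p]) *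
    ∏ m ∈ Finset.range (n + 1), (tau^[m] x) / eps (tau^[m] x)

/-- Finite continued fraction `b 0 / (a 0 + b 1 / (a 1 + ⋯ + b n / (a n + x)))`. -/
noncomputable def cf {p : ℕ} [Fact p.Prime] : (ℕ → ℚ_[p]) → (ℕ → ℚ_[p]) → ℕ → ℚ_[p] → ℚ_[p]
  | a, b, 0, x => b 0 / (a 0 + x)
  | a, b, n + 1, x => b 0 / (a 0 + cf (fun i => a (i + 1)) (fun i => b (i + 1)) n x)

namespace SchneiderAux
variable {p : ℕ} [Fact p.Prime]

lemma norm_eps (x : ℚ_[p]) : ‖eps x‖ = 1 := by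
  by_cases hx : x = 0
  · simp [eps, hx]
  · have hp0 : ((p : ℝ)) ≠ 0 := by exact_mod_cast (Fact.out : p.Prime).ne_zero
    rw [eps, if_neg hx, norm_mul, Padic.norm_p_zpow, Padic.norm_eq_zpow_neg_valuation hx,
      neg_neg, ← zpow_add₀ hp0, add_neg_cancel, zpow_zero]

lemma eps_ne_zero (x : ℚ_[p]) : eps x ≠ 0 := by
  intro h
  have := norm_eps x
  rw [h, norm_zero] at this
  norm_num at this

lemma norm_one_div_eps (x : ℚ_[p]) : ‖1 / eps x‖ = 1 := by
  rw [norm_div, norm_one, norm_eps x, div_one]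

lemma fdigit_spec {y : ℚ_[p]} (hy : ‖y‖ = 1) :
    (fdigit y : ℚ_[p]) ≠ 0 ∧ ‖(fdigit y : ℚ_[p])‖ = 1 ∧ ‖y - (fdigit y : ℚ_[p])‖ ≤ (p : ℝ)⁻¹ := by
  haveI : NeZero p := ⟨(Fact.out : p.Prime).ne_zero⟩
  have h1 : ‖y‖ ≤ 1 := hy.le
  set z : ℤ_[p] := ⟨y, h1⟩ with hz
  have hfd : fdigit y = (PadicInt.toZMod z).val := dif_pos h1
  have hzne : PadicInt.toZMod z ≠ 0 := by
    intro h
    have hk : z ∈ RingHom.ker (PadicInt.toZMod (p := p)) := h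
    rw [PadicInt.ker_toZMod, PadicInt.maximalIdeal_eq_span_p, Ideal.mem_span_singleton,
      ← PadicInt.norm_lt_one_iff_dvd] at hk
    have hz1 : ‖z‖ = 1 := hy
    rw [hz1] at hk
    exact lt_irrefl _ hk
  have hvlt : (PadicInt.toZMod z).val < p := ZMod.val_lt _
  have hvne : (PadicInt.toZMod z).val ≠ 0 := fun h => hzne ((ZMod.val_eq_zero _).mp h)
  have hndvd : ¬ (p : ℤ) ∣ ((PadicInt.toZMod z).val : ℤ) := by
    rw [Int.natCast_dvd_natCast]
    exact Nat.not_dvd_of_pos_of_lt (Nat.pos_of_ne_zero hvne) hvlt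
  have hnorm1 : ‖(fdigit y : ℚ_[p])‖ = 1 := by
    rw [hfd]
    have hle : ‖(((PadicInt.toZMod z).val : ℤ) : ℚ_[p])‖ ≤ 1 := Padic.norm_int_le_one _
    have hnlt : ¬ ‖(((PadicInt.toZMod z).val : ℤ) : ℚ_[p])‖ < 1 := by
      rw [Padic.norm_intCast_lt_one_iff]
      exact hndvd
    push_cast at hle hnlt ⊢
    exact le_antisymm hle (not_lt.mp hnlt)
  refine ⟨by rw [hfd]; exact_mod_cast hvne, hnorm1, ?_⟩
  have hspec := PadicInt.toZMod_spec z
  rw [PadicInt.maximalIdeal_eq_span_p, Ideal.mem_span_singleton] at hspec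
  obtain ⟨c, hc⟩ := hspec
  have hcast : ((PadicInt.toZMod z).val : ℤ_[p]) = ZMod.cast (PadicInt.toZMod z) :=
    ZMod.natCast_val _
  have hw : ‖z - ((PadicInt.toZMod z).val : ℤ_[p])‖ ≤ (p : ℝ)⁻¹ := by
    rw [hcast, hc, norm_mul, PadicInt.norm_p]
    exact mul_le_of_le_one_right (by positivity) (PadicInt.norm_le_one c)
  have : y - (fdigit y : ℚ_[p]) = ((z - ((PadicInt.toZMod z).val : ℤ_[p]) : ℤ_[p]) : ℚ_[p]) := by
    push_cast [hfd]
    ring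
  rw [this, ← PadicInt.norm_def]
  exact hw

lemma norm_tau_le (x : ℚ_[p]) : ‖tau x‖ ≤ (p : ℝ)⁻¹ :=
  (fdigit_spec (norm_one_div_eps x)).2.2

lemma key (n : ℕ) : ∀ x : ℚ_[p],
    ‖x - cf (fun k => (fdigit (1 / eps (tau^[k] x)) : ℚ_[p]))
      (fun k => tau^[k] x / eps (tau^[k] x)) n 0‖ ≤ (p : ℝ) ^ (-(n : ℤ) - 1) * ‖x‖ := by
  have hp1 : (1 : ℝ) < p := by exact_mod_cast (Fact.out : p.Prime).one_lt
  have hp0 : ((p : ℝ)) ≠ 0 := by positivity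
  induction n with
  | zero =>
    intro x
    by_cases hx : x = 0
    · simp [cf, hx, eps]
    · have ha0 := (fdigit_spec (norm_one_div_eps x)).2.1
      have ha0ne : (fdigit (1 / eps x) : ℚ_[p]) ≠ 0 := (fdigit_spec (norm_one_div_eps x)).1
      have heps := eps_ne_zero x
      have hid : x - cf (fun k => (fdigit (1 / eps (tau^[k] x)) : ℚ_[p]))
          (fun k => tau^[k] x / eps (tau^[k] x)) 0 0
          = -(x * tau x) / (fdigit (1 / eps x) : ℚ_[p]) := by
        simp only [cf, Function.iterate_zero_apply, add_zero]
        rw [tau]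
        field_simp
        ring
      rw [hid, norm_div, norm_neg, norm_mul, ha0, div_one]
      have hexp : (p : ℝ) ^ (-((0 : ℕ) : ℤ) - 1) = (p : ℝ)⁻¹ := by
        norm_num
      rw [hexp, mul_comm ((p : ℝ)⁻¹) ‖x‖]
      exact mul_le_mul_of_nonneg_left (norm_tau_le x) (norm_nonneg x)
  | succ n IH =>
    intro x
    by_cases hx : x = 0
    · simp [cf, hx, eps]
    · have ha0 := (fdigit_spec (norm_one_div_eps x)).2.1
      have heps := eps_ne_zero x
      simp only [cf, Function.iterate_succ_apply, Function.iterate_zero_apply]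
      have hIH := IH (tau x)
      set C := cf (fun k => ((fdigit (1 / eps (tau^[k] (tau x))) : ℕ) : ℚ_[p]))
        (fun k => tau^[k] (tau x) / eps (tau^[k] (tau x))) n 0 with hCdef
      set t := tau x with htdef
      set a0 := ((fdigit (1 / eps x) : ℕ) : ℚ_[p]) with ha0def
      have ht : ‖t‖ ≤ (p : ℝ)⁻¹ := norm_tau_le x
      have hple : (p : ℝ) ^ (-(n : ℤ) - 1) ≤ 1 := by
        calc (p : ℝ) ^ (-(n : ℤ) - 1) ≤ (p : ℝ) ^ (0 : ℤ) :=
          zpow_le_zpow_right₀ hp1.le (by omega)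
        _ = 1 := zpow_zero _
      have htC : ‖t - C‖ ≤ (p : ℝ)⁻¹ := by
        calc ‖t - C‖ ≤ (p : ℝ) ^ (-(n : ℤ) - 1) * ‖t‖ := hIH
        _ ≤ 1 * (p : ℝ)⁻¹ := by
          apply mul_le_mul hple ht (norm_nonneg _) zero_le_one
        _ = (p : ℝ)⁻¹ := one_mul _
      have hpinv1 : (p : ℝ)⁻¹ < 1 := inv_lt_one_of_one_lt₀ hp1
      have hC1 : ‖C‖ < 1 := by
        have h1 : C = t + -(t - C) := by ring
        calc ‖C‖ = ‖t + -(t - C)‖ := by rw [← h1]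
        _ ≤ max ‖t‖ ‖-(t - C)‖ := Padic.nonarchimedean _ _
        _ < 1 := by
          rw [norm_neg]
          exact max_lt (lt_of_le_of_lt ht hpinv1) (lt_of_le_of_lt htC hpinv1)
      have haC : ‖a0 + C‖ = 1 := by
        rw [Padic.add_eq_max_of_ne (by rw [ha0]; exact hC1.ne'),
          max_eq_left (by rw [ha0]; exact hC1.le), ha0]
      have haCne : a0 + C ≠ 0 := by
        intro h; rw [h, norm_zero] at haC; norm_num at haC
      have hat : a0 + t = 1 / eps x := by rw [htdef, tau, ha0def]; ring
      have hb0 : x / eps x = x * (a0 + t) := by rw [hat, mul_one_div]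
      have hid : x - x / eps x / (a0 + C) = x * (C - t) / (a0 + C) := by
        rw [hb0]; field_simp; ring
      rw [hid, norm_div, norm_mul, haC, div_one, norm_sub_rev]
      have h2 : ‖t - C‖ ≤ (p : ℝ) ^ (-(n : ℤ) - 1) * (p : ℝ)⁻¹ :=
        hIH.trans (mul_le_mul_of_nonneg_left ht (by positivity))
      have h3 : (p : ℝ) ^ (-(n : ℤ) - 1) * (p : ℝ)⁻¹ = (p : ℝ) ^ (-((n + 1 : ℕ) : ℤ) - 1) := by
        rw [← zpow_neg_one (p : ℝ), ← zpow_add₀ hp0]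
        congr 1
        push_cast
        ring
      calc ‖x‖ * ‖t - C‖ ≤ ‖x‖ * ((p : ℝ) ^ (-(n : ℤ) - 1) * (p : ℝ)⁻¹) :=
        mul_le_mul_of_nonneg_left h2 (norm_nonneg x)
      _ = (p : ℝ) ^ (-((n + 1 : ℕ) : ℤ) - 1) * ‖x‖ := by rw [h3]; ring

end SchneiderAux

theorem schneider_convergents_tendsto (p : ℕ) [Fact p.Prime] (x : ℚ_[p]) :
    (∀ n : ℕ, ‖x - cf (fun k => (fdigit (1 / eps (tau^[k] x)) : ℚ_[p]))
        (fun k => tau^[k] x / eps (tau^[k] x)) n 0‖ ≤ (p : ℝ) ^ (-(n : ℤ)) * ‖x‖) ∧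
    Filter.Tendsto (fun n => cf (fun k => (fdigit (1 / eps (tau^[k] x)) : ℚ_[p]))
        (fun k => tau^[k] x / eps (tau^[k] x)) n 0) Filter.atTop (nhds x) := by
  have hp1 : (1 : ℝ) < p := by exact_mod_cast (Fact.out : p.Prime).one_lt
  have hbound : ∀ n : ℕ, ‖x - cf (fun k => (fdigit (1 / eps (tau^[k] x)) : ℚ_[p]))
      (fun k => tau^[k] x / eps (tau^[k] x)) n 0‖ ≤ (p : ℝ) ^ (-(n : ℤ)) * ‖x‖ := by
    intro n
    refine (SchneiderAux.key n x).trans ?_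
    exact mul_le_mul_of_nonneg_right (zpow_le_zpow_right₀ hp1.le (by omega)) (norm_nonneg x)
  refine ⟨hbound, ?_⟩
  rw [tendsto_iff_norm_sub_tendsto_zero]
  refine squeeze_zero (g := fun n : ℕ => (p : ℝ) ^ (-(n : ℤ)) * ‖x‖)
    (fun n => norm_nonneg _) (fun n => ?_) ?_
  · rw [norm_sub_rev]; exact hbound n
  have heq : (fun n : ℕ => (p : ℝ) ^ (-(n : ℤ)) * ‖x‖)
      = fun n : ℕ => ((p : ℝ)⁻¹) ^ n * ‖x‖ := by
    funext n
    rw [zpow_neg, ← inv_zpow, zpow_natCast]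
  rw [heq]
  have h0 : Filter.Tendsto (fun n : ℕ => ((p : ℝ)⁻¹) ^ n) Filter.atTop (nhds 0) :=
    tendsto_pow_atTop_nhds_zero_of_lt_one (by positivity) (inv_lt_one_of_one_lt₀ hp1)
  simpa using h0.mul_const ‖x‖
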